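/- Let n_0, n_1, n_2 be positive integers and let Λ : ℂ^{n_1} × ℂ^{n_2} → ℂ^{n_0} be a bilinear map. Let p_0, p_1 ∈ [1, ∞] and M_0, M_1 > 0 be such that ‖Λ(a,b)‖_{p_0} ≤ M_0 ‖a‖_{p_0} ‖b‖_{p_0} and ‖Λ(a,b)‖_{p_1} ≤ M_1 ‖a‖_{p_1} ‖b‖_{p_1} hold for all a ∈ ℂ^{n_1} and b ∈ ℂ^{n_2}. Then for every θ ∈ [0,1], setting 1/p_θ = (1−θ)/p_0 + θ/p_1, one has ‖Λ(a,b)‖_{p_θ} ≤ M_0^{1−θ} M_1^{θ} ‖a‖_{p_θ} ‖b‖_{p_θ} for all a ∈ ℂ^{n_1} and b ∈ ℂ^{n_2}. -/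

import Mathlib

open scoped ENNReal

noncomputable def lpNormV {n : ℕ} (p : ℝ≥0∞) (v : Fin n → ℂ) : ℝ :=
  if p = ⊤ then ⨆ i, ‖v i‖
  else (∑ i, ‖v i‖ ^ p.toReal) ^ (1 / p.toReal)

namespace RTB

/-- Reparametrized norm: `t = 1/p ∈ [0,1]`. -/
noncomputable def N {n : ℕ} (t : ℝ) (v : Fin n → ℂ) : ℝ :=
  if t = 0 then ⨆ i, ‖v i‖
  else (∑ i, ‖v i‖ ^ (1 / t)) ^ t

lemma lpNormV_eq {n : ℕ} (p : ℝ≥0∞) (hp : p ≠ 0) (v : Fin n → ℂ) :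
    lpNormV p v = N (1 / p).toReal v := by
  rcases eq_or_ne p ⊤ with h | h
  · simp [lpNormV, N, h]
  · have hpt : p.toReal ≠ 0 := ENNReal.toReal_ne_zero.2 ⟨hp, h⟩
    simp only [lpNormV, N, h, if_false, one_div, ENNReal.toReal_inv]
    rw [if_neg (inv_ne_zero hpt), inv_inv]

lemma N_nonneg {n : ℕ} (t : ℝ) (v : Fin n → ℂ) : 0 ≤ N t v := by
  unfold N
  split
  · exact Real.iSup_nonneg fun i => (norm_nonneg _)
  · exact Real.rpow_nonneg (Finset.sum_nonneg fun i _ => Real.rpow_nonneg (norm_nonneg _) _) _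

lemma N_zero {n : ℕ} (t : ℝ) : N t (0 : Fin n → ℂ) = 0 := by
  unfold N
  split
  next h => simp [Real.iSup_const_zero]
  next h => simp [Real.zero_rpow (inv_ne_zero h), Real.zero_rpow h, mul_zero]

lemma N_pos {n : ℕ} (t : ℝ) (ht : 0 ≤ t) (v : Fin n → ℂ) (hv : v ≠ 0) : 0 < N t v := by
  obtain ⟨i, hi⟩ : ∃ i, v i ≠ 0 := by
    by_contra h; push_neg at h; exact hv (funext h)
  have hvi : 0 < ‖v i‖ := norm_pos_iff.mpr hi
  unfold N
  split
  case isTrue =>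
    haveI : Nonempty (Fin n) := ⟨i⟩
    calc (0:ℝ) < ‖v i‖ := hvi
    _ ≤ ⨆ j, ‖v j‖ := le_ciSup (f := fun j => ‖v j‖) (Set.Finite.bddAbove (Set.finite_range _)) i
  case isFalse h =>
    apply Real.rpow_pos_of_pos
    have : (0:ℝ) < ‖v i‖ ^ (1/t) := Real.rpow_pos_of_pos hvi _
    calc (0:ℝ) < ‖v i‖ ^ (1/t) := this
    _ ≤ ∑ j, ‖v j‖ ^ (1/t) :=
      Finset.single_le_sum (fun j _ => Real.rpow_nonneg (norm_nonneg _) _) (Finset.mem_univ i)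

lemma N_smul {n : ℕ} (t : ℝ) (ht : 0 < t) (c : ℂ) (v : Fin n → ℂ) :
    N t (c • v) = ‖c‖ * N t v := by
  unfold N
  rw [if_neg ht.ne', if_neg ht.ne']
  have h1 : ∀ i, ‖(c • v) i‖ ^ (1/t)
      = ‖c‖ ^ (1/t) * ‖v i‖ ^ (1/t) := by
    intro i
    simp only [Pi.smul_apply, smul_eq_mul, norm_mul]
    rw [Real.mul_rpow (norm_nonneg _) (norm_nonneg _)]
  simp_rw [h1, ← Finset.mul_sum]
  rw [Real.mul_rpow (Real.rpow_nonneg (norm_nonneg _) _)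
    (Finset.sum_nonneg fun i _ => Real.rpow_nonneg (norm_nonneg _) _),
    ← Real.rpow_mul (norm_nonneg _), one_div_mul_cancel ht.ne', Real.rpow_one]



lemma N_zero_eq {n : ℕ} (v : Fin n → ℂ) : N 0 v = ⨆ i, ‖v i‖ := by simp [N]

lemma le_N_zero {n : ℕ} (v : Fin n → ℂ) (i : Fin n) : ‖v i‖ ≤ N 0 v := by
  rw [N_zero_eq]
  exact le_ciSup (f := fun j => ‖v j‖) (Set.Finite.bddAbove (Set.finite_range _)) i

lemma N_one {n : ℕ} (v : Fin n → ℂ) : N 1 v = ∑ i, ‖v i‖ := by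
  simp [N]

/-- Hölder's inequality in the `t = 1/p` parametrization. -/
lemma holder {n : ℕ} (hn : 0 < n) (t : ℝ) (ht0 : 0 ≤ t) (ht1 : t ≤ 1) (v w : Fin n → ℂ) :
    ∑ i, ‖v i‖ * ‖w i‖ ≤ N t v * N (1 - t) w := by
  haveI : Nonempty (Fin n) := Fin.pos_iff_nonempty.mp hn
  rcases eq_or_lt_of_le ht0 with h0 | h0
  · -- t = 0 : sup * ℓ¹
    rw [← h0]
    have hsup := le_N_zero v
    calc ∑ i, ‖v i‖ * ‖w i‖
        ≤ ∑ i, N 0 v * ‖w i‖ :=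
          Finset.sum_le_sum fun i _ => mul_le_mul_of_nonneg_right (hsup i) (norm_nonneg _)
      _ = N 0 v * ∑ i, ‖w i‖ := by rw [← Finset.mul_sum]
      _ = N 0 v * N (1 - 0) w := by rw [sub_zero, N_one]
  rcases eq_or_lt_of_le ht1 with h1 | h1
  · -- t = 1
    subst h1
    have hsup := le_N_zero w
    calc ∑ i, ‖v i‖ * ‖w i‖
        ≤ ∑ i, ‖v i‖ * N 0 w :=
          Finset.sum_le_sum fun i _ => mul_le_mul_of_nonneg_left (hsup i) (norm_nonneg _)
      _ = N 1 v * N (1 - 1) w := by rw [← Finset.sum_mul, N_one, sub_self]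
  · -- 0 < t < 1
    have hconj : Real.HolderConjugate (1/t) (1/(1-t)) := by
      constructor
      · rw [one_div, inv_inv, one_div, inv_inv]; ring
      · exact one_div_pos.2 h0
      · exact one_div_pos.2 (by linarith)
    have := Real.inner_le_Lp_mul_Lq (s := Finset.univ)
      (f := fun i => ‖v i‖) (g := fun i => ‖w i‖) hconj
    simp only [abs_of_nonneg (norm_nonneg _)] at this
    unfold N
    rw [if_neg h0.ne', if_neg (by linarith : (1:ℝ) - t ≠ 0)]
    calc ∑ i, ‖v i‖ * ‖w i‖
        ≤ (∑ i, ‖v i‖ ^ (1/t)) ^ (1/(1/t))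
          * (∑ i, ‖w i‖ ^ (1/(1-t))) ^ (1/(1/(1-t))) := this
      _ = _ := by rw [one_div_one_div, one_div_one_div]




/-- Duality is attained: for `0 < t < 1` there is a dual vector `c` with
`N (1-t) c ≤ 1` and `∑ v i * c i = N t v`. -/
lemma dual_attained {n : ℕ} (t : ℝ) (ht0 : 0 < t) (ht1 : t < 1) (v : Fin n → ℂ) :
    ∃ c : Fin n → ℂ, N (1 - t) c ≤ 1 ∧ ∑ i, v i * c i = (N t v : ℂ) := by
  rcases eq_or_ne v 0 with rfl | hv
  · exact ⟨0, by simp [N_zero], by simp [N_zero]⟩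
  set S : ℝ := ∑ i, ‖v i‖ ^ (1/t) with hS
  have hterm : ∀ i, 0 ≤ ‖v i‖ ^ (1/t) := fun i => Real.rpow_nonneg (norm_nonneg _) _
  obtain ⟨i₀, hi₀⟩ : ∃ i, v i ≠ 0 := by
    by_contra h; push_neg at h; exact hv (funext h)
  have hSpos : 0 < S := by
    have : 0 < ‖v i₀‖ ^ (1/t) := Real.rpow_pos_of_pos (norm_pos_iff.mpr hi₀) _
    exact lt_of_lt_of_le this (Finset.single_le_sum (fun i _ => hterm i) (Finset.mem_univ i₀))
  have hNv : N t v = S ^ t := by rw [N, if_neg ht0.ne']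
  set c : Fin n → ℂ := fun i =>
    (starRingEnd ℂ) (v i) * ((‖v i‖ ^ (1/t - 2) / S ^ (1 - t) : ℝ) : ℂ) with hc
  have habs : ∀ i, ‖c i‖ = ‖v i‖ ^ (1/t - 1) / S ^ (1 - t) := by
    intro i
    rcases eq_or_ne (v i) 0 with h | h
    · rw [hc]
      simp only [h, map_zero, zero_mul, norm_zero]
      rw [Real.zero_rpow (by
        have : (1:ℝ) < 1/t := by rw [lt_div_iff₀ ht0]; linarith
        intro hh; rw [sub_eq_zero] at hh; linarith), zero_div]
    · have hv0 : 0 < ‖v i‖ := norm_pos_iff.mpr h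
      rw [hc]
      simp only [norm_mul, Complex.norm_conj, Complex.norm_real, Real.norm_eq_abs]
      rw [abs_of_nonneg (by positivity), show (1/t - 1:ℝ) = 1 + (1/t - 2) by ring,
        Real.rpow_add hv0, Real.rpow_one, mul_div_assoc]
  have hvc : ∀ i, v i * c i = ((‖v i‖ ^ (1/t) / S ^ (1 - t) : ℝ) : ℂ) := by
    intro i
    rcases eq_or_ne (v i) 0 with h | h
    · simp [hc, h, Real.zero_rpow (one_div_ne_zero ht0.ne'),
        Real.zero_rpow (inv_ne_zero ht0.ne'), zero_div]
    · have hv0 : 0 < ‖v i‖ := norm_pos_iff.mpr h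
      rw [hc, ← mul_assoc, Complex.mul_conj]
      rw [← Complex.ofReal_mul]
      congr 1
      rw [Complex.normSq_eq_norm_sq, ← mul_div_assoc]
      congr 1
      rw [← Real.rpow_natCast (‖v i‖) 2]
      rw [show (((2:ℕ)):ℝ) = 2 by norm_num, show (1/t:ℝ) = 2 + (1/t-2) by ring,
        Real.rpow_add hv0]
      ring_nf
  refine ⟨c, ?_, ?_⟩
  · -- N (1-t) c ≤ 1
    have h1t : (0:ℝ) < 1 - t := by linarith
    rw [N, if_neg h1t.ne']
    have : ∀ i, ‖c i‖ ^ (1/(1-t)) = ‖v i‖ ^ (1/t) / S := by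
      intro i
      rw [habs i, Real.div_rpow (Real.rpow_nonneg (norm_nonneg _) _) (Real.rpow_nonneg hSpos.le _)]
      rw [← Real.rpow_mul (norm_nonneg _), ← Real.rpow_mul hSpos.le,
        mul_one_div (1-t), div_self h1t.ne', Real.rpow_one]
      rw [show (1/t - 1)*(1/(1-t)) = 1/t from by field_simp [ht0.ne', h1t.ne']]
    simp_rw [this, ← Finset.sum_div, ← hS, div_self hSpos.ne']
    rw [Real.one_rpow]
  · -- pairing value
    simp_rw [hvc]
    rw [← Complex.ofReal_sum]
    rw [hNv]
    congr 1
    rw [← Finset.sum_div, ← hS,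
      div_eq_iff (Real.rpow_pos_of_pos hSpos _).ne', ← Real.rpow_add hSpos,
      show t + (1-t) = (1:ℝ) by ring, Real.rpow_one]




/-- If `N t v ≤ 1` with `t > 0`, then the "power sum" is at most 1. -/
lemma sum_le_one {n : ℕ} {t : ℝ} (ht : 0 < t) {v : Fin n → ℂ} (hv : N t v ≤ 1) :
    ∑ i, ‖v i‖ ^ (1 / t) ≤ 1 := by
  rw [N, if_neg ht.ne'] at hv
  by_contra h
  push_neg at h
  have := Real.one_lt_rpow_iff_of_pos (lt_trans one_pos h) (y := t) |>.2 (Or.inl ⟨h, ht⟩)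
  linarith

/-- Key edge estimate: if `N t v ≤ 1` and `|v' i| = |v i| ^ (t'/t)` (with `v' i = 0`
when `v i = 0`), then `N t' v' ≤ 1`. -/
lemma N_edge {n : ℕ} {t t' : ℝ} (ht : 0 < t) (ht' : 0 ≤ t') (v v' : Fin n → ℂ)
    (hv : N t v ≤ 1)
    (h : ∀ i, ‖v' i‖ = if v i = 0 then 0 else ‖v i‖ ^ (t' / t)) :
    N t' v' ≤ 1 := by
  have hsum := sum_le_one ht hv
  rcases eq_or_lt_of_le ht' with h0 | h0
  · -- t' = 0 : sup norm
    rw [N, if_pos h0.symm]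
    apply Real.iSup_le _ zero_le_one
    intro i
    rw [h i]
    split
    · exact zero_le_one
    next hz =>
      rw [← h0, zero_div, Real.rpow_zero]
  · rw [N, if_neg h0.ne']
    have hterm : ∀ i, ‖v' i‖ ^ (1/t') ≤ ‖v i‖ ^ (1/t) := by
      intro i
      rcases eq_or_ne (v i) 0 with hz | hz
      · rw [h i, if_pos hz, hz]
        simp only [norm_zero]
        rw [Real.zero_rpow (one_div_ne_zero h0.ne'), Real.zero_rpow (one_div_ne_zero ht.ne')]
      · rw [h i, if_neg hz, ← Real.rpow_mul (norm_nonneg _)]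
        rw [show t'/t * (1/t') = 1/t from by field_simp]
    calc (∑ i, ‖v' i‖ ^ (1/t')) ^ t'
        ≤ (∑ i, ‖v i‖ ^ (1/t)) ^ t' := by
          apply Real.rpow_le_rpow (Finset.sum_nonneg fun i _ => Real.rpow_nonneg (norm_nonneg _) _)
            (Finset.sum_le_sum fun i _ => hterm i) h0.le
      _ ≤ 1 ^ t' := Real.rpow_le_rpow (Finset.sum_nonneg fun i _ =>
            Real.rpow_nonneg (norm_nonneg _) _) hsum h0.le
      _ = 1 := Real.one_rpow _




section bilin
variable {n₀ n₁ n₂ : ℕ} (Λ : (Fin n₁ → ℂ) → (Fin n₂ → ℂ) → (Fin n₀ → ℂ))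
  (hadd₁ : ∀ a a' b, Λ (a + a') b = Λ a b + Λ a' b)
  (hsmul₁ : ∀ (c : ℂ) a b, Λ (c • a) b = c • Λ a b)
  (hadd₂ : ∀ a b b', Λ a (b + b') = Λ a b + Λ a b')
  (hsmul₂ : ∀ (c : ℂ) a b, Λ a (c • b) = c • Λ a b)

include hadd₁ hsmul₁ hadd₂ hsmul₂ in
lemma bilin_expand (a : Fin n₁ → ℂ) (b : Fin n₂ → ℂ) :
    Λ a b = ∑ j, ∑ k, (a j * b k) • Λ (Pi.single j 1) (Pi.single k 1) := by
  have ha : a = ∑ j, a j • (Pi.single j 1 : Fin n₁ → ℂ) := by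
    funext x
    simp [Pi.single_apply, Finset.sum_apply, mul_ite, Finset.sum_ite_eq']
  have hb : b = ∑ k, b k • (Pi.single k 1 : Fin n₂ → ℂ) := by
    funext x
    simp [Pi.single_apply, Finset.sum_apply, mul_ite, Finset.sum_ite_eq']
  have hsum₁ : ∀ (g : Fin n₁ → (Fin n₁ → ℂ)) (b' : Fin n₂ → ℂ),
      Λ (∑ j, g j) b' = ∑ j, Λ (g j) b' := by
    intro g b'
    exact map_sum (AddMonoidHom.mk' (fun a' => Λ a' b') (fun x y => hadd₁ x y b')) g Finset.univ
  have hsum₂ : ∀ (a' : Fin n₁ → ℂ) (g : Fin n₂ → (Fin n₂ → ℂ)),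
      Λ a' (∑ k, g k) = ∑ k, Λ a' (g k) := by
    intro a' g
    exact map_sum (AddMonoidHom.mk' (fun b' => Λ a' b') (fun x y => hadd₂ a' x y)) g Finset.univ
  conv_lhs => rw [ha, hb]
  rw [hsum₁]
  refine Finset.sum_congr rfl fun j _ => ?_
  rw [hsmul₁, hsum₂, Finset.smul_sum]
  refine Finset.sum_congr rfl fun k _ => ?_
  rw [hsmul₂, smul_smul, mul_comm]

end bilin

/-- The analytic family of "power vectors". -/
noncomputable def pw {n : ℕ} (e₀ e₁ : ℝ) (a : Fin n → ℂ) (z : ℂ) : Fin n → ℂ := fun j =>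
  if a j = 0 then 0
  else (‖a j‖ : ℂ) ^ ((1 - z) * (e₀ : ℂ) + z * (e₁ : ℂ)) * (a j / ‖a j‖)

lemma pw_abs {n : ℕ} (e₀ e₁ : ℝ) (a : Fin n → ℂ) (z : ℂ) (j : Fin n) :
    ‖pw e₀ e₁ a z j‖ =
      if a j = 0 then 0 else ‖a j‖ ^ ((1 - z.re) * e₀ + z.re * e₁) := by
  unfold pw
  rcases eq_or_ne (a j) 0 with h | h
  · simp [h]
  · rw [if_neg h, if_neg h]
    have h0 : 0 < ‖a j‖ := norm_pos_iff.mpr h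
    rw [norm_mul, Complex.norm_cpow_eq_rpow_re_of_pos h0]
    have : ‖a j / ‖a j‖‖ = 1 := by
      rw [norm_div, Complex.norm_real, Real.norm_eq_abs, abs_of_nonneg (norm_nonneg _), div_self h0.ne']
    rw [this, mul_one]
    congr 1
    simp [Complex.add_re, Complex.mul_re, Complex.sub_re]

lemma pw_diff {n : ℕ} (e₀ e₁ : ℝ) (a : Fin n → ℂ) (j : Fin n) :
    Differentiable ℂ (fun z => pw e₀ e₁ a z j) := by
  unfold pw
  rcases eq_or_ne (a j) 0 with h | h
  · simp only [h, if_pos rfl]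
    exact differentiable_const 0
  · simp only [if_neg h]
    apply Differentiable.mul _ (differentiable_const _)
    apply Differentiable.const_cpow
    · apply Differentiable.add
      · exact (differentiable_const _ |>.sub differentiable_id).mul (differentiable_const _)
      · exact differentiable_id.mul (differentiable_const _)
    · left
      simpa using norm_ne_zero_iff.mpr h

lemma pw_bound {n : ℕ} (e₀ e₁ : ℝ) (a : Fin n → ℂ) (z : ℂ) (h0 : 0 ≤ z.re) (h1 : z.re ≤ 1)
    (j : Fin n) :
    ‖pw e₀ e₁ a z j‖
      ≤ max (‖a j‖ ^ e₀) (‖a j‖ ^ e₁) := by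
  rw [pw_abs]
  rcases eq_or_ne (a j) 0 with h | h
  · rw [if_pos h]
    exact le_max_of_le_left (Real.rpow_nonneg (norm_nonneg _) _)
  · rw [if_neg h]
    have hpos : 0 < ‖a j‖ := norm_pos_iff.mpr h
    set x := z.re
    have hmem : (1 - x) * e₀ + x * e₁ ∈ Set.Icc (min e₀ e₁) (max e₀ e₁) := by
      constructor
      · have := min_le_left e₀ e₁; have := min_le_right e₀ e₁
        nlinarith
      · have := le_max_left e₀ e₁; have := le_max_right e₀ e₁
        nlinarith
    rcases le_total (‖a j‖) 1 with hle | hle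
    · calc ‖a j‖ ^ ((1-x)*e₀ + x*e₁)
          ≤ ‖a j‖ ^ (min e₀ e₁) :=
            Real.rpow_le_rpow_of_exponent_ge hpos hle hmem.1
        _ ≤ max (‖a j‖ ^ e₀) (‖a j‖ ^ e₁) := by
            rcases min_cases e₀ e₁ with ⟨hm, _⟩ | ⟨hm, _⟩ <;> rw [hm]
            · exact le_max_left _ _
            · exact le_max_right _ _
    · calc ‖a j‖ ^ ((1-x)*e₀ + x*e₁)
          ≤ ‖a j‖ ^ (max e₀ e₁) :=
            Real.rpow_le_rpow_of_exponent_le hle hmem.2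
        _ ≤ max (‖a j‖ ^ e₀) (‖a j‖ ^ e₁) := by
            rcases max_cases e₀ e₁ with ⟨hm, _⟩ | ⟨hm, _⟩ <;> rw [hm]
            · exact le_max_left _ _
            · exact le_max_right _ _

lemma pw_at {n : ℕ} (e₀ e₁ : ℝ) (a : Fin n → ℂ) (θ : ℝ) (hθ : (1 - θ) * e₀ + θ * e₁ = 1) :
    pw e₀ e₁ a (θ : ℂ) = a := by
  funext j
  unfold pw
  rcases eq_or_ne (a j) 0 with h | h
  · simp [h]
  · rw [if_neg h]
    have hexp : (1 - (θ:ℂ)) * (e₀:ℂ) + (θ:ℂ) * (e₁:ℂ) = 1 := by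
      have := congrArg (Complex.ofReal) hθ
      push_cast at this
      simpa using this
    rw [hexp, Complex.cpow_one]
    have h0 : (‖a j‖ : ℂ) ≠ 0 := by
      simpa using norm_ne_zero_iff.mpr h
    field_simp


open Complex.HadamardThreeLines in
lemma main_case {n₀ n₁ n₂ : ℕ} (h₀ : 0 < n₀) (h₁ : 0 < n₁) (h₂ : 0 < n₂)
    (Λ : (Fin n₁ → ℂ) → (Fin n₂ → ℂ) → (Fin n₀ → ℂ))
    (hadd₁ : ∀ a a' b, Λ (a + a') b = Λ a b + Λ a' b)
    (hsmul₁ : ∀ (c : ℂ) a b, Λ (c • a) b = c • Λ a b)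
    (hadd₂ : ∀ a b b', Λ a (b + b') = Λ a b + Λ a b')
    (hsmul₂ : ∀ (c : ℂ) a b, Λ a (c • b) = c • Λ a b)
    (t₀ t₁ : ℝ) (ht₀0 : 0 ≤ t₀) (ht₀1 : t₀ ≤ 1) (ht₁0 : 0 ≤ t₁) (ht₁1 : t₁ ≤ 1)
    (M₀ M₁ : ℝ) (hM₀ : 0 < M₀) (hM₁ : 0 < M₁)
    (H0 : ∀ a b, N t₀ (Λ a b) ≤ M₀ * N t₀ a * N t₀ b)
    (H1 : ∀ a b, N t₁ (Λ a b) ≤ M₁ * N t₁ a * N t₁ b)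
    (θ : ℝ) (hθ0 : 0 ≤ θ) (hθ1 : θ ≤ 1)
    (tθ : ℝ) (htθ : tθ = (1-θ)*t₀ + θ*t₁) (htθ0 : 0 < tθ) (htθ1 : tθ < 1)
    (a : Fin n₁ → ℂ) (b : Fin n₂ → ℂ) (ha : N tθ a = 1) (hb : N tθ b = 1) :
    N tθ (Λ a b) ≤ M₀ ^ (1-θ) * M₁ ^ θ := by
  have h1mtθ : (0:ℝ) < 1 - tθ := by linarith
  obtain ⟨c, hc1, hc2⟩ := dual_attained tθ htθ0 htθ1 (Λ a b)
  set F : ℂ → ℂ := fun z => ∑ i, Λ (pw (t₀/tθ) (t₁/tθ) a z) (pw (t₀/tθ) (t₁/tθ) b z) i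
      * pw ((1-t₀)/(1-tθ)) ((1-t₁)/(1-tθ)) c z i with hF
  -- value at θ
  have hAθ : pw (t₀/tθ) (t₁/tθ) a (θ:ℂ) = a := by
    apply pw_at
    field_simp
    linarith [htθ]
  have hBθ : pw (t₀/tθ) (t₁/tθ) b (θ:ℂ) = b := by
    apply pw_at
    field_simp
    linarith [htθ]
  have hCθ : pw ((1-t₀)/(1-tθ)) ((1-t₁)/(1-tθ)) c (θ:ℂ) = c := by
    apply pw_at
    field_simp
    linarith [htθ]
  have hFθ : F (θ:ℂ) = ((N tθ (Λ a b) : ℝ) : ℂ) := by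
    rw [hF]
    simp only
    rw [hAθ, hBθ, hCθ]
    exact hc2
  -- generic edge estimate
  have hedge : ∀ (z : ℂ) (t' M' : ℝ), 0 ≤ t' → t' ≤ 1 → 0 < M' →
      (∀ x y, N t' (Λ x y) ≤ M' * N t' x * N t' y) →
      ((1 - z.re) * (t₀/tθ) + z.re * (t₁/tθ) = t'/tθ) →
      ((1 - z.re) * ((1-t₀)/(1-tθ)) + z.re * ((1-t₁)/(1-tθ)) = (1-t')/(1-tθ)) →
      ‖F z‖ ≤ M' := by
    intro z t' M' ht'0 ht'1 hM' H hea hec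
    have hNA : N t' (pw (t₀/tθ) (t₁/tθ) a z) ≤ 1 :=
      N_edge htθ0 ht'0 a _ ha.le (fun j => by rw [pw_abs, hea])
    have hNB : N t' (pw (t₀/tθ) (t₁/tθ) b z) ≤ 1 :=
      N_edge htθ0 ht'0 b _ hb.le (fun k => by rw [pw_abs, hea])
    have hNC : N (1-t') (pw ((1-t₀)/(1-tθ)) ((1-t₁)/(1-tθ)) c z) ≤ 1 :=
      N_edge h1mtθ (by linarith) c _ hc1 (fun i => by rw [pw_abs, hec])
    have hnn0 := N_nonneg t' (pw (t₀/tθ) (t₁/tθ) a z)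
    have hnn1 := N_nonneg t' (pw (t₀/tθ) (t₁/tθ) b z)
    have hnn2 := N_nonneg (1-t') (pw ((1-t₀)/(1-tθ)) ((1-t₁)/(1-tθ)) c z)
    calc ‖F z‖
        ≤ ∑ i, ‖Λ (pw (t₀/tθ) (t₁/tθ) a z) (pw (t₀/tθ) (t₁/tθ) b z) i‖
            * ‖pw ((1-t₀)/(1-tθ)) ((1-t₁)/(1-tθ)) c z i‖ := by
          rw [hF]
          refine le_trans (norm_sum_le _ _) (le_of_eq ?_)
          exact Finset.sum_congr rfl fun i _ => norm_mul _ _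
      _ ≤ N t' (Λ (pw (t₀/tθ) (t₁/tθ) a z) (pw (t₀/tθ) (t₁/tθ) b z))
            * N (1-t') (pw ((1-t₀)/(1-tθ)) ((1-t₁)/(1-tθ)) c z) :=
          holder h₀ t' ht'0 ht'1 _ _
      _ ≤ (M' * N t' (pw (t₀/tθ) (t₁/tθ) a z) * N t' (pw (t₀/tθ) (t₁/tθ) b z))
            * N (1-t') (pw ((1-t₀)/(1-tθ)) ((1-t₁)/(1-tθ)) c z) :=
          mul_le_mul_of_nonneg_right (H _ _) hnn2
      _ ≤ M' := by
          set NA := N t' (pw (t₀/tθ) (t₁/tθ) a z)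
          set NB := N t' (pw (t₀/tθ) (t₁/tθ) b z)
          set NC := N (1-t') (pw ((1-t₀)/(1-tθ)) ((1-t₁)/(1-tθ)) c z)
          have s1 : M' * NA ≤ M' := mul_le_of_le_one_right hM'.le hNA
          have s2 : M' * NA * NB ≤ M' :=
            le_trans (mul_le_of_le_one_right (mul_nonneg hM'.le hnn0) hNB) s1
          exact le_trans
            (mul_le_of_le_one_right (mul_nonneg (mul_nonneg hM'.le hnn0) hnn1) hNC) s2
  -- expansion of F as a finite sum of elementary analytic functions
  have hFeq : F = fun z => ∑ i, ∑ j, ∑ k,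
      pw (t₀/tθ) (t₁/tθ) a z j * pw (t₀/tθ) (t₁/tθ) b z k
        * (Λ (Pi.single j 1) (Pi.single k 1) i
        * pw ((1-t₀)/(1-tθ)) ((1-t₁)/(1-tθ)) c z i) := by
    funext z
    rw [hF]
    simp only
    refine Finset.sum_congr rfl fun i _ => ?_
    rw [bilin_expand Λ hadd₁ hsmul₁ hadd₂ hsmul₂
      (pw (t₀/tθ) (t₁/tθ) a z) (pw (t₀/tθ) (t₁/tθ) b z)]
    simp only [Finset.sum_apply, Pi.smul_apply, smul_eq_mul]
    rw [Finset.sum_mul]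
    refine Finset.sum_congr rfl fun j _ => ?_
    rw [Finset.sum_mul]
    refine Finset.sum_congr rfl fun k _ => ?_
    ring
  have hFdiff : Differentiable ℂ F := by
    rw [hFeq]
    apply Differentiable.fun_sum
    intro i _
    apply Differentiable.fun_sum
    intro j _
    apply Differentiable.fun_sum
    intro k _
    exact ((pw_diff _ _ a j).mul (pw_diff _ _ b k)).mul
      ((differentiable_const _).mul (pw_diff _ _ c i))
  have hbdd : BddAbove ((norm ∘ F) '' verticalClosedStrip 0 1) := by
    refine ⟨∑ i, ∑ j, ∑ k,
      max (‖a j‖ ^ (t₀/tθ)) (‖a j‖ ^ (t₁/tθ))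
      * max (‖b k‖ ^ (t₀/tθ)) (‖b k‖ ^ (t₁/tθ))
      * (‖Λ (Pi.single j 1) (Pi.single k 1) i‖
        * max (‖c i‖ ^ ((1-t₀)/(1-tθ))) (‖c i‖ ^ ((1-t₁)/(1-tθ)))), ?_⟩
    rintro y ⟨z, hz, rfl⟩
    obtain ⟨hz0, hz1⟩ : 0 ≤ z.re ∧ z.re ≤ 1 := hz
    simp only [Function.comp_apply]
    rw [hFeq]
    simp only
    refine le_trans (norm_sum_le _ _) (Finset.sum_le_sum fun i _ => ?_)
    refine le_trans (norm_sum_le _ _) (Finset.sum_le_sum fun j _ => ?_)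
    refine le_trans (norm_sum_le _ _) (Finset.sum_le_sum fun k _ => ?_)
    rw [norm_mul, norm_mul, norm_mul]
    have p1 := pw_bound (t₀/tθ) (t₁/tθ) a z hz0 hz1 j
    have p2 := pw_bound (t₀/tθ) (t₁/tθ) b z hz0 hz1 k
    have p3 := pw_bound ((1-t₀)/(1-tθ)) ((1-t₁)/(1-tθ)) c z hz0 hz1 i
    have q1 : (0:ℝ) ≤ max (‖a j‖ ^ (t₀/tθ)) (‖a j‖ ^ (t₁/tθ)) :=
      le_max_of_le_left (Real.rpow_nonneg (norm_nonneg _) _)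
    have q2 : (0:ℝ) ≤ max (‖b k‖ ^ (t₀/tθ)) (‖b k‖ ^ (t₁/tθ)) :=
      le_max_of_le_left (Real.rpow_nonneg (norm_nonneg _) _)
    gcongr
  have hmem : (θ:ℂ) ∈ verticalClosedStrip 0 1 := by
    simp only [verticalClosedStrip, Set.mem_preimage, Complex.ofReal_re, Set.mem_Icc]
    exact ⟨hθ0, hθ1⟩
  have hthree := norm_le_interp_of_mem_verticalClosedStrip₀₁' F hmem
    (hFdiff.diffContOnCl) hbdd
    (fun z hz => by
      simp only [Set.mem_preimage, Set.mem_singleton_iff] at hz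
      simpa only using
        hedge z t₀ M₀ ht₀0 ht₀1 hM₀ H0 (by rw [hz]; ring) (by rw [hz]; ring))
    (fun z hz => by
      simp only [Set.mem_preimage, Set.mem_singleton_iff] at hz
      simpa only using
        hedge z t₁ M₁ ht₁0 ht₁1 hM₁ H1 (by rw [hz]; ring) (by rw [hz]; ring))
  rw [hFθ] at hthree
  rw [Complex.norm_real, Real.norm_eq_abs, abs_of_nonneg (N_nonneg _ _), Complex.ofReal_re]
    at hthree
  exact hthree

/-- Reduced form of the main theorem, in the `t = 1/p` parametrization. -/
lemma main_reduced {n₀ n₁ n₂ : ℕ} (h₀ : 0 < n₀) (h₁ : 0 < n₁) (h₂ : 0 < n₂)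
    (Λ : (Fin n₁ → ℂ) → (Fin n₂ → ℂ) → (Fin n₀ → ℂ))
    (hadd₁ : ∀ a a' b, Λ (a + a') b = Λ a b + Λ a' b)
    (hsmul₁ : ∀ (c : ℂ) a b, Λ (c • a) b = c • Λ a b)
    (hadd₂ : ∀ a b b', Λ a (b + b') = Λ a b + Λ a b')
    (hsmul₂ : ∀ (c : ℂ) a b, Λ a (c • b) = c • Λ a b)
    (t₀ t₁ : ℝ) (ht₀0 : 0 ≤ t₀) (ht₀1 : t₀ ≤ 1) (ht₁0 : 0 ≤ t₁) (ht₁1 : t₁ ≤ 1)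
    (M₀ M₁ : ℝ) (hM₀ : 0 < M₀) (hM₁ : 0 < M₁)
    (H0 : ∀ a b, N t₀ (Λ a b) ≤ M₀ * N t₀ a * N t₀ b)
    (H1 : ∀ a b, N t₁ (Λ a b) ≤ M₁ * N t₁ a * N t₁ b)
    (θ : ℝ) (hθ0 : 0 ≤ θ) (hθ1 : θ ≤ 1)
    (a : Fin n₁ → ℂ) (b : Fin n₂ → ℂ) :
    N ((1-θ)*t₀ + θ*t₁) (Λ a b)
      ≤ M₀ ^ (1-θ) * M₁ ^ θ * N ((1-θ)*t₀ + θ*t₁) a * N ((1-θ)*t₀ + θ*t₁) b := by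
  set tθ : ℝ := (1-θ)*t₀ + θ*t₁ with htθ
  have hMθ : 0 < M₀ ^ (1-θ) * M₁ ^ θ :=
    mul_pos (Real.rpow_pos_of_pos hM₀ _) (Real.rpow_pos_of_pos hM₁ _)
  by_cases hcase : t₀ = t₁
  · -- equal exponents
    have htt : tθ = t₀ := by rw [htθ, ← hcase]; ring
    have hmin : min M₀ M₁ ≤ M₀ ^ (1-θ) * M₁ ^ θ := by
      have hminpos : 0 < min M₀ M₁ := lt_min hM₀ hM₁
      calc min M₀ M₁ = min M₀ M₁ ^ ((1-θ) + θ) := by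
            rw [show (1-θ) + θ = (1:ℝ) by ring, Real.rpow_one]
        _ = min M₀ M₁ ^ (1-θ) * min M₀ M₁ ^ θ := Real.rpow_add hminpos _ _
        _ ≤ M₀ ^ (1-θ) * M₁ ^ θ := by
            apply mul_le_mul
            · exact Real.rpow_le_rpow hminpos.le (min_le_left _ _) (by linarith)
            · exact Real.rpow_le_rpow hminpos.le (min_le_right _ _) hθ0
            · exact Real.rpow_nonneg hminpos.le _
            · exact Real.rpow_nonneg hM₀.le _
    have hNab : 0 ≤ N t₀ a * N t₀ b := mul_nonneg (N_nonneg _ _) (N_nonneg _ _)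
    rw [htt]
    rcases min_cases M₀ M₁ with ⟨hm, _⟩ | ⟨hm, _⟩
    · calc N t₀ (Λ a b) ≤ M₀ * N t₀ a * N t₀ b := H0 a b
        _ = min M₀ M₁ * (N t₀ a * N t₀ b) := by rw [hm]; ring
        _ ≤ M₀ ^ (1-θ) * M₁ ^ θ * (N t₀ a * N t₀ b) :=
            mul_le_mul_of_nonneg_right hmin hNab
        _ = M₀ ^ (1-θ) * M₁ ^ θ * N t₀ a * N t₀ b := by ring
    · calc N t₀ (Λ a b) = N t₁ (Λ a b) := by rw [hcase]
        _ ≤ M₁ * N t₁ a * N t₁ b := H1 a b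
        _ = min M₀ M₁ * (N t₁ a * N t₁ b) := by rw [hm]; ring
        _ ≤ M₀ ^ (1-θ) * M₁ ^ θ * (N t₁ a * N t₁ b) :=
            mul_le_mul_of_nonneg_right hmin
              (mul_nonneg (N_nonneg _ _) (N_nonneg _ _))
        _ = M₀ ^ (1-θ) * M₁ ^ θ * N t₀ a * N t₀ b := by rw [hcase]; ring
  rcases eq_or_lt_of_le hθ0 with h0 | h0
  · -- θ = 0
    have htt : tθ = t₀ := by rw [htθ, ← h0]; ring
    rw [htt, ← h0, sub_zero, Real.rpow_one, Real.rpow_zero, mul_one]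
    exact H0 a b
  rcases eq_or_lt_of_le hθ1 with h1 | h1
  · -- θ = 1
    have htt : tθ = t₁ := by rw [htθ, h1]; ring
    rw [htt, h1, sub_self, Real.rpow_zero, Real.rpow_one, one_mul]
    exact H1 a b
  · -- main case : 0 < θ < 1, t₀ ≠ t₁
    have hor : 0 < t₀ ∨ 0 < t₁ := by
      rcases eq_or_lt_of_le ht₀0 with hz | hz
      · right
        rcases eq_or_lt_of_le ht₁0 with hz' | hz'
        · exact absurd (hz.symm.trans hz') hcase
        · exact hz'
      · exact Or.inl hz
    have hor' : t₀ < 1 ∨ t₁ < 1 := by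
      rcases eq_or_lt_of_le ht₀1 with hz | hz
      · right
        rcases eq_or_lt_of_le ht₁1 with hz' | hz'
        · exact absurd (hz.trans hz'.symm) hcase
        · exact hz'
      · exact Or.inl hz
    have htθ0 : 0 < tθ := by
      rw [htθ]
      rcases hor with hz | hz <;> nlinarith
    have htθ1 : tθ < 1 := by
      rw [htθ]
      rcases hor' with hz | hz <;> nlinarith
    have hΛ0₁ : ∀ y, Λ 0 y = 0 := by
      intro y
      have := hsmul₁ 0 0 y
      simpa using this
    have hΛ0₂ : ∀ x, Λ x 0 = 0 := by
      intro x
      have := hsmul₂ 0 x 0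
      simpa using this
    rcases eq_or_ne a 0 with rfl | hA
    · simp [hΛ0₁, N_zero]
    rcases eq_or_ne b 0 with rfl | hB
    · simp [hΛ0₂, N_zero]
    set α := N tθ a with hα
    set β := N tθ b with hβ
    have hαpos : 0 < α := N_pos tθ htθ0.le a hA
    have hβpos : 0 < β := N_pos tθ htθ0.le b hB
    set a' : Fin n₁ → ℂ := ((α:ℂ))⁻¹ • a with ha'
    set b' : Fin n₂ → ℂ := ((β:ℂ))⁻¹ • b with hb'
    have habs : ∀ (x : ℝ), 0 < x → ‖((x:ℂ))⁻¹‖ = x⁻¹ := by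
      intro x hx
      rw [norm_inv, Complex.norm_real, Real.norm_eq_abs, abs_of_pos hx]
    have haN : N tθ a' = 1 := by
      rw [ha', N_smul tθ htθ0, habs α hαpos, ← hα, inv_mul_cancel₀ hαpos.ne']
    have hbN : N tθ b' = 1 := by
      rw [hb', N_smul tθ htθ0, habs β hβpos, ← hβ, inv_mul_cancel₀ hβpos.ne']
    have key := main_case h₀ h₁ h₂ Λ hadd₁ hsmul₁ hadd₂ hsmul₂ t₀ t₁ ht₀0 ht₀1 ht₁0 ht₁1
      M₀ M₁ hM₀ hM₁ H0 H1 θ hθ0 hθ1 tθ htθ htθ0 htθ1 a' b' haN hbN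
    have hsplit : Λ a b = ((α:ℂ) * (β:ℂ)) • Λ a' b' := by
      have hA2 : a = (α:ℂ) • a' := by
        rw [ha', smul_smul, mul_inv_cancel₀, one_smul]
        exact_mod_cast (Complex.ofReal_ne_zero).2 hαpos.ne'
      have hB2 : b = (β:ℂ) • b' := by
        rw [hb', smul_smul, mul_inv_cancel₀, one_smul]
        exact_mod_cast (Complex.ofReal_ne_zero).2 hβpos.ne'
      conv_lhs => rw [hA2, hB2]
      rw [hsmul₁, hsmul₂, smul_smul]
    have hNsplit : N tθ (Λ a b) = α * β * N tθ (Λ a' b') := by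
      rw [hsplit, N_smul tθ htθ0, norm_mul, Complex.norm_real, Real.norm_eq_abs, Complex.norm_real, Real.norm_eq_abs,
        abs_of_pos hαpos, abs_of_pos hβpos]
    calc N tθ (Λ a b) = α * β * N tθ (Λ a' b') := hNsplit
      _ ≤ α * β * (M₀ ^ (1-θ) * M₁ ^ θ) := by
          apply mul_le_mul_of_nonneg_left key (by positivity)
      _ = M₀ ^ (1-θ) * M₁ ^ θ * α * β := by ring

theorem riesz_thorin_bilinear'
    (n₀ n₁ n₂ : ℕ) (h₀ : 0 < n₀) (h₁ : 0 < n₁) (h₂ : 0 < n₂)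
    (Λ : (Fin n₁ → ℂ) → (Fin n₂ → ℂ) → (Fin n₀ → ℂ))
    (hadd₁ : ∀ a a' b, Λ (a + a') b = Λ a b + Λ a' b)
    (hsmul₁ : ∀ (c : ℂ) a b, Λ (c • a) b = c • Λ a b)
    (hadd₂ : ∀ a b b', Λ a (b + b') = Λ a b + Λ a b')
    (hsmul₂ : ∀ (c : ℂ) a b, Λ a (c • b) = c • Λ a b)
    (p₀ p₁ : ℝ≥0∞) (hp₀ : 1 ≤ p₀) (hp₁ : 1 ≤ p₁)
    (M₀ M₁ : ℝ) (hM₀ : 0 < M₀) (hM₁ : 0 < M₁)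
    (h0 : ∀ a b, lpNormV p₀ (Λ a b) ≤ M₀ * lpNormV p₀ a * lpNormV p₀ b)
    (h1 : ∀ a b, lpNormV p₁ (Λ a b) ≤ M₁ * lpNormV p₁ a * lpNormV p₁ b)
    (θ : ℝ) (hθ0 : 0 ≤ θ) (hθ1 : θ ≤ 1)
    (pθ : ℝ≥0∞)
    (hpθ : 1 / pθ = ENNReal.ofReal (1 - θ) / p₀ + ENNReal.ofReal θ / p₁) :
    ∀ a b, lpNormV pθ (Λ a b) ≤
      M₀ ^ (1 - θ) * M₁ ^ θ * lpNormV pθ a * lpNormV pθ b := by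
  intro a b
  have hp₀0 : p₀ ≠ 0 := (zero_lt_one.trans_le hp₀).ne'
  have hp₁0 : p₁ ≠ 0 := (zero_lt_one.trans_le hp₁).ne'
  set t₀ : ℝ := (1/p₀).toReal with ht₀def
  set t₁ : ℝ := (1/p₁).toReal with ht₁def
  have ht₀0 : 0 ≤ t₀ := ENNReal.toReal_nonneg
  have ht₁0 : 0 ≤ t₁ := ENNReal.toReal_nonneg
  have hinv₀ : 1/p₀ ≤ 1 := by
    rw [one_div]
    exact ENNReal.inv_le_one.2 hp₀
  have hinv₁ : 1/p₁ ≤ 1 := by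
    rw [one_div]
    exact ENNReal.inv_le_one.2 hp₁
  have ht₀1 : t₀ ≤ 1 := by
    rw [ht₀def]
    calc (1/p₀).toReal ≤ (1:ℝ≥0∞).toReal := ENNReal.toReal_mono ENNReal.one_ne_top hinv₀
      _ = 1 := ENNReal.toReal_one
  have ht₁1 : t₁ ≤ 1 := by
    rw [ht₁def]
    calc (1/p₁).toReal ≤ (1:ℝ≥0∞).toReal := ENNReal.toReal_mono ENNReal.one_ne_top hinv₁
      _ = 1 := ENNReal.toReal_one
  -- finiteness of the two summands
  have hfin₀ : ENNReal.ofReal (1-θ) / p₀ ≠ ⊤ :=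
    (ENNReal.div_lt_top ENNReal.ofReal_ne_top hp₀0).ne
  have hfin₁ : ENNReal.ofReal θ / p₁ ≠ ⊤ :=
    (ENNReal.div_lt_top ENNReal.ofReal_ne_top hp₁0).ne
  have hpθ0 : pθ ≠ 0 := by
    intro h
    rw [h, one_div, ENNReal.inv_zero] at hpθ
    exact (ENNReal.add_ne_top.2 ⟨hfin₀, hfin₁⟩) hpθ.symm
  have htoR : (1/pθ).toReal = (1-θ)*t₀ + θ*t₁ := by
    rw [hpθ, ENNReal.toReal_add hfin₀ hfin₁]
    congr 1
    · rw [div_eq_mul_inv, ENNReal.toReal_mul, ENNReal.toReal_ofReal (by linarith), ht₀def, one_div]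
    · rw [div_eq_mul_inv, ENNReal.toReal_mul, ENNReal.toReal_ofReal hθ0, ht₁def, one_div]
  have H0 : ∀ x y, N t₀ (Λ x y) ≤ M₀ * N t₀ x * N t₀ y := by
    intro x y
    have := h0 x y
    rwa [lpNormV_eq p₀ hp₀0, lpNormV_eq p₀ hp₀0, lpNormV_eq p₀ hp₀0] at this
  have H1 : ∀ x y, N t₁ (Λ x y) ≤ M₁ * N t₁ x * N t₁ y := by
    intro x y
    have := h1 x y
    rwa [lpNormV_eq p₁ hp₁0, lpNormV_eq p₁ hp₁0, lpNormV_eq p₁ hp₁0] at this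
  rw [lpNormV_eq pθ hpθ0, lpNormV_eq pθ hpθ0, lpNormV_eq pθ hpθ0, htoR]
  exact main_reduced h₀ h₁ h₂ Λ hadd₁ hsmul₁ hadd₂ hsmul₂ t₀ t₁ ht₀0 ht₀1 ht₁0 ht₁1
    M₀ M₁ hM₀ hM₁ H0 H1 θ hθ0 hθ1 a b

end RTB

theorem riesz_thorin_bilinear
    (n₀ n₁ n₂ : ℕ) (h₀ : 0 < n₀) (h₁ : 0 < n₁) (h₂ : 0 < n₂)
    (Λ : (Fin n₁ → ℂ) → (Fin n₂ → ℂ) → (Fin n₀ → ℂ))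
    (hadd₁ : ∀ a a' b, Λ (a + a') b = Λ a b + Λ a' b)
    (hsmul₁ : ∀ (c : ℂ) a b, Λ (c • a) b = c • Λ a b)
    (hadd₂ : ∀ a b b', Λ a (b + b') = Λ a b + Λ a b')
    (hsmul₂ : ∀ (c : ℂ) a b, Λ a (c • b) = c • Λ a b)
    (p₀ p₁ : ℝ≥0∞) (hp₀ : 1 ≤ p₀) (hp₁ : 1 ≤ p₁)
    (M₀ M₁ : ℝ) (hM₀ : 0 < M₀) (hM₁ : 0 < M₁)
    (h0 : ∀ a b, lpNormV p₀ (Λ a b) ≤ M₀ * lpNormV p₀ a * lpNormV p₀ b)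
    (h1 : ∀ a b, lpNormV p₁ (Λ a b) ≤ M₁ * lpNormV p₁ a * lpNormV p₁ b)
    (θ : ℝ) (hθ0 : 0 ≤ θ) (hθ1 : θ ≤ 1)
    (pθ : ℝ≥0∞)
    (hpθ : 1 / pθ = ENNReal.ofReal (1 - θ) / p₀ + ENNReal.ofReal θ / p₁) :
    ∀ a b, lpNormV pθ (Λ a b) ≤
      M₀ ^ (1 - θ) * M₁ ^ θ * lpNormV pθ a * lpNormV pθ b :=
  RTB.riesz_thorin_bilinear' n₀ n₁ n₂ h₀ h₁ h₂ Λ hadd₁ hsmul₁ hadd₂ hsmul₂ p₀ p₁ hp₀ hp₁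
    M₀ M₁ hM₀ hM₁ h0 h1 θ hθ0 hθ1 pθ hpθ
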